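/- arXiv:1807.10789 — 3 statements merged into one kernel-verified Lean document; each statement's English description precedes it below -/
import Mathlib

section
/- Every connected graph G with at least 3 vertices and threshold function satisfying thr(v) ≤ ⌈deg(v)/3⌉ for every vertex v has a perfect target set of size at most 0.45·|V(G)|. -/
open scoped Classical


noncomputable def actSeq {V : Type*} [Fintype V] (G : SimpleGraph V) (thr : V → ℕ)
    (X : Finset V) : ℕ → Finset V
  | 0 => X
  | i + 1 => actSeq G thr X i ∪
      Finset.univ.filter (fun v => thr v ≤ (G.neighborFinset v ∩ actSeq G thr X i).card)

noncomputable def actFinal {V : Type*} [Fintype V] (G : SimpleGraph V) (thr : V → ℕ)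
    (X : Finset V) : Finset V :=
  actSeq G thr X (Fintype.card V)

def IsPerfectTargetSet {V : Type*} [Fintype V] (G : SimpleGraph V) (thr : V → ℕ)
    (X : Finset V) : Prop :=
  actFinal G thr X = Finset.univ

namespace PTSAux
open Finset
variable {V : Type*} [Fintype V]

lemma actSeq_succ (G : SimpleGraph V) (thr : V → ℕ) (X : Finset V) (i : ℕ) :
    actSeq G thr X (i+1) = actSeq G thr X i ∪
      Finset.univ.filter (fun v => thr v ≤ (G.neighborFinset v ∩ actSeq G thr X i).card) := rfl

lemma actSeq_le_succ (G : SimpleGraph V) (thr : V → ℕ) (X : Finset V) (i : ℕ) :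
    actSeq G thr X i ⊆ actSeq G thr X (i+1) := by
  rw [actSeq_succ]; exact subset_union_left

lemma actSeq_mono (G : SimpleGraph V) (thr : V → ℕ) (X : Finset V) {i j : ℕ} (h : i ≤ j) :
    actSeq G thr X i ⊆ actSeq G thr X j := by
  induction j with
  | zero => simpa [Nat.le_zero.mp h]
  | succ j ih =>
    rcases Nat.lt_or_ge i (j+1) with h'|h'
    · exact (ih (Nat.lt_succ_iff.mp h')).trans (actSeq_le_succ G thr X j)
    · have : i = j+1 := le_antisymm h h'
      subst this; exact subset_rfl

lemma subset_actSeq (G : SimpleGraph V) (thr : V → ℕ) (X : Finset V) (i : ℕ) :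
    X ⊆ actSeq G thr X i := actSeq_mono G thr X (Nat.zero_le i)

lemma mem_actSeq_succ (G : SimpleGraph V) (thr : V → ℕ) (X : Finset V) (i : ℕ) {v : V}
    (h : thr v ≤ (G.neighborFinset v ∩ actSeq G thr X i).card) :
    v ∈ actSeq G thr X (i+1) := by
  rw [actSeq_succ]
  exact mem_union_right _ (mem_filter.mpr ⟨mem_univ v, h⟩)


end PTSAux

namespace PTSAux
open Finset
variable {V : Type*} [Fintype V]

noncomputable def bigS (G : SimpleGraph V) : Finset V :=
  univ.filter (fun v => 2 ≤ G.degree v)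

noncomputable def Xset (G : SimpleGraph V) (thr : V → ℕ)
    (σ : V ≃ Fin (Fintype.card V)) : Finset V :=
  (bigS G).filter (fun w =>
    ((G.neighborFinset w ∩ bigS G).filter (fun u => σ u < σ w)).card < thr w)

lemma act_of_rank (G : SimpleGraph V) (thr : V → ℕ) (σ : V ≃ Fin (Fintype.card V)) :
    ∀ k : ℕ, ∀ w ∈ bigS G, ((bigS G).filter (fun u => σ u < σ w)).card < k →
      w ∈ actSeq G thr (Xset G thr σ) k := by
  intro k
  induction k with
  | zero => intro w _ h; omega
  | succ k ih =>
    intro w hw hr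
    by_cases hX : w ∈ Xset G thr σ
    · exact subset_actSeq G thr _ _ hX
    · have hth : thr w ≤ ((G.neighborFinset w ∩ bigS G).filter (fun u => σ u < σ w)).card := by
        by_contra hc
        exact hX (mem_filter.mpr ⟨hw, by omega⟩)
      apply mem_actSeq_succ
      refine hth.trans (card_le_card ?_)
      intro u hu
      simp only [mem_filter, mem_inter] at hu
      obtain ⟨⟨hun, huS⟩, hult⟩ := hu
      refine mem_inter.mpr ⟨hun, ih u huS ?_⟩
      have hsub : (bigS G).filter (fun x => σ x < σ u) ⊂ (bigS G).filter (fun x => σ x < σ w) := by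
        refine Finset.ssubset_iff_of_subset ?_ |>.mpr ⟨u, ?_, ?_⟩
        · intro x hx
          simp only [mem_filter] at hx ⊢
          exact ⟨hx.1, hx.2.trans hult⟩
        · exact mem_filter.mpr ⟨huS, hult⟩
        · simp
      have := card_lt_card hsub
      omega

lemma pts_of_order (G : SimpleGraph V) (thr : V → ℕ)
    (hn : 0 < Fintype.card V)
    (hdeg : ∀ v : V, 0 < G.degree v)
    (hleafnbr : ∀ v : V, G.degree v = 1 → ∀ u : V, G.Adj v u → 2 ≤ G.degree u)
    (hthr1 : ∀ v : V, G.degree v = 1 → thr v ≤ 1)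
    (σ : V ≃ Fin (Fintype.card V)) :
    IsPerfectTargetSet G thr (Xset G thr σ) := by
  have rank_lt : ∀ w ∈ bigS G, ((bigS G).filter (fun u => σ u < σ w)).card < (bigS G).card := by
    intro w hw
    have h1 : (bigS G).filter (fun u => σ u < σ w) ⊆ (bigS G).erase w := by
      intro x hx
      simp only [mem_filter] at hx
      refine mem_erase.mpr ⟨?_, hx.1⟩
      rintro rfl; exact absurd hx.2 (lt_irrefl _)
    calc ((bigS G).filter (fun u => σ u < σ w)).card ≤ ((bigS G).erase w).card :=
          card_le_card h1
      _ < (bigS G).card := card_erase_lt_of_mem hw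
  unfold IsPerfectTargetSet actFinal
  apply eq_univ_of_forall
  intro v
  by_cases hv : 2 ≤ G.degree v
  · have hvS : v ∈ bigS G := mem_filter.mpr ⟨mem_univ v, hv⟩
    apply act_of_rank G thr σ _ v hvS
    exact lt_of_lt_of_le (rank_lt v hvS) (le_trans (card_le_card (filter_subset _ _))
      (by simp))
  · have hd1 : G.degree v = 1 := by have := hdeg v; omega
    obtain ⟨u, hu⟩ : ∃ u, G.neighborFinset v = {u} :=
      card_eq_one.mp (by rwa [← SimpleGraph.card_neighborFinset_eq_degree] at hd1)
    have hadj : G.Adj v u := by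
      rw [← SimpleGraph.mem_neighborFinset, hu]; exact mem_singleton_self u
    have huS : u ∈ bigS G := mem_filter.mpr ⟨mem_univ u, hleafnbr v hd1 u hadj⟩
    have hvnotS : v ∉ bigS G := by
      simp only [bigS, mem_filter]; tauto
    have hScard : (bigS G).card ≤ Fintype.card V - 1 := by
      have h1 : bigS G ⊆ univ.erase v := fun x hx =>
        mem_erase.mpr ⟨fun h => hvnotS (h ▸ hx), mem_univ x⟩
      calc (bigS G).card ≤ (univ.erase v).card := card_le_card h1
        _ = Fintype.card V - 1 := by rw [card_erase_of_mem (mem_univ v), card_univ]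
    have huact : u ∈ actSeq G thr (Xset G thr σ) (Fintype.card V - 1) := by
      apply act_of_rank G thr σ _ u huS
      exact lt_of_lt_of_le (rank_lt u huS) hScard
    have : v ∈ actSeq G thr (Xset G thr σ) (Fintype.card V - 1 + 1) := by
      apply mem_actSeq_succ
      have : u ∈ G.neighborFinset v ∩ actSeq G thr (Xset G thr σ) (Fintype.card V - 1) :=
        mem_inter.mpr ⟨by rw [hu]; exact mem_singleton_self u, huact⟩
      calc thr v ≤ 1 := hthr1 v hd1
        _ ≤ _ := card_pos.mpr ⟨u, this⟩
    rwa [Nat.sub_add_cancel hn] at this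

end PTSAux


open Finset in
lemma card_filter_lt_fin {c : ℕ} (k : Fin c) :
    (Finset.univ.filter (fun i : Fin c => i < k)).card = k := by
  have : (Finset.univ.filter (fun i : Fin c => i < k)) = Finset.Iio k := by
    ext i; simp
  rw [this, Fin.card_Iio]

open Finset in
lemma swap_image_self {α : Type*} [DecidableEq α] (s : Finset α) {a b : α}
    (ha : a ∈ s) (hb : b ∈ s) : s.image (Equiv.swap a b) = s := by
  ext x
  simp only [mem_image]
  constructor
  · rintro ⟨y, hy, rfl⟩
    rcases eq_or_ne y a with rfl|hya
    · rwa [Equiv.swap_apply_left]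
    rcases eq_or_ne y b with rfl|hyb
    · rwa [Equiv.swap_apply_right]
    · rwa [Equiv.swap_apply_of_ne_of_ne hya hyb]
  · intro hx
    refine ⟨Equiv.swap a b x, ?_, Equiv.swap_apply_self a b x⟩
    rcases eq_or_ne x a with rfl|hxa
    · rwa [Equiv.swap_apply_left]
    rcases eq_or_ne x b with rfl|hxb
    · rwa [Equiv.swap_apply_right]
    · rwa [Equiv.swap_apply_of_ne_of_ne hxa hxb]

open Finset in
lemma filter_lt_nth {α : Type*} [LinearOrder α] (s : Finset α) {c : ℕ} (h : s.card = c)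
    (k : Fin c) : (s.filter (· < (s.orderIsoOfFin h k : α))).card = k := by
  have himg : s.filter (· < (s.orderIsoOfFin h k : α)) =
      (Finset.univ.filter (fun i : Fin c => i < k)).image
        (fun i => (s.orderIsoOfFin h i : α)) := by
    ext z
    simp only [mem_filter, mem_image, Finset.mem_univ, true_and]
    constructor
    · rintro ⟨hz, hlt⟩
      refine ⟨(s.orderIsoOfFin h).symm ⟨z, hz⟩, ?_, by simp⟩
      have : (s.orderIsoOfFin h ((s.orderIsoOfFin h).symm ⟨z, hz⟩) : α) = z := by simp
      rw [← (s.orderIsoOfFin h).lt_iff_lt]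
      exact Subtype.coe_lt_coe.mp (by rw [OrderIso.apply_symm_apply]; exact hlt)
    · rintro ⟨i, hik, rfl⟩
      refine ⟨(s.orderIsoOfFin h i).2, ?_⟩
      exact Subtype.coe_lt_coe.mpr ((s.orderIsoOfFin h).lt_iff_lt.mpr hik)
  rw [himg, Finset.card_image_of_injective _
    (fun a b hab => (s.orderIsoOfFin h).injective (Subtype.ext hab)),
    card_filter_lt_fin]

lemma nth_of_filter_lt {α : Type*} [LinearOrder α] (s : Finset α) {c : ℕ} (h : s.card = c)
    {z : α} (hz : z ∈ s) (i : Fin c) (hrk : (s.filter (· < z)).card = i) :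
    (s.orderIsoOfFin h i : α) = z := by
  obtain ⟨k, hk⟩ : ∃ k : Fin c, (s.orderIsoOfFin h k : α) = z :=
    ⟨(s.orderIsoOfFin h).symm ⟨z, hz⟩, by simp⟩
  have := filter_lt_nth s h k
  rw [hk, hrk] at this
  rwa [show i = k from Fin.ext this]

namespace PTSAux
open Finset
variable {V : Type*} [Fintype V]

noncomputable def rk (C : Finset V) (w : V) (σ : V ≃ Fin (Fintype.card V)) : ℕ :=
  (C.filter (fun u => σ u < σ w)).card

lemma imgcard (C : Finset V) (σ : V ≃ Fin (Fintype.card V)) : (C.image σ).card = C.card :=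
  card_image_of_injective _ σ.injective

lemma rk_eq_image (C : Finset V) (w : V) (σ : V ≃ Fin (Fintype.card V)) :
    rk C w σ = ((C.image σ).filter (· < σ w)).card := by
  rw [rk, filter_image, card_image_of_injective _ σ.injective]

lemma rk_lt (C : Finset V) {w : V} (hw : w ∈ C) (σ : V ≃ Fin (Fintype.card V)) :
    rk C w σ < C.card := by
  have h1 : C.filter (fun u => σ u < σ w) ⊆ C.erase w := by
    intro x hx
    simp only [mem_filter] at hx
    refine mem_erase.mpr ⟨?_, hx.1⟩
    rintro rfl; exact absurd hx.2 (lt_irrefl _)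
  exact lt_of_le_of_lt (card_le_card h1) (card_erase_lt_of_mem hw)

/-- the swap map sending any σ to one whose rank is j -/
noncomputable def swapMap (C : Finset V) (w : V) (j : Fin C.card)
    (σ : V ≃ Fin (Fintype.card V)) : V ≃ Fin (Fintype.card V) :=
  σ.trans (Equiv.swap (σ w) ((C.image σ).orderIsoOfFin (imgcard C σ) j : Fin (Fintype.card V)))

lemma swapMap_image (C : Finset V) {w : V} (hw : w ∈ C) (j : Fin C.card)
    (σ : V ≃ Fin (Fintype.card V)) :
    C.image (swapMap C w j σ) = C.image σ := by
  have : C.image (swapMap C w j σ) = (C.image σ).image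
      (Equiv.swap (σ w) ((C.image σ).orderIsoOfFin (imgcard C σ) j : Fin (Fintype.card V))) := by
    rw [image_image]; rfl
  rw [this, swap_image_self]
  · exact mem_image_of_mem _ hw
  · exact ((C.image σ).orderIsoOfFin (imgcard C σ) j).2

lemma swapMap_rk (C : Finset V) {w : V} (hw : w ∈ C) (j : Fin C.card)
    (σ : V ≃ Fin (Fintype.card V)) :
    rk C w (swapMap C w j σ) = j := by
  rw [rk_eq_image, swapMap_image C hw]
  have hww : swapMap C w j σ w =
      ((C.image σ).orderIsoOfFin (imgcard C σ) j : Fin (Fintype.card V)) := by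
    simp [swapMap]
  rw [hww]
  exact filter_lt_nth _ _ j

lemma swapMap_invol (C : Finset V) {w : V} (hw : w ∈ C) (i j : Fin C.card)
    (σ : V ≃ Fin (Fintype.card V)) (hσ : rk C w σ = i) :
    swapMap C w i (swapMap C w j σ) = σ := by
  set y : Fin (Fintype.card V) :=
    ((C.image σ).orderIsoOfFin (imgcard C σ) j : Fin (Fintype.card V)) with hy
  have himg := swapMap_image C hw j σ
  have hnth : ((C.image (swapMap C w j σ)).orderIsoOfFin (imgcard C _) i : Fin (Fintype.card V))
      = σ w := by
    have h1 : ((C.image σ).orderIsoOfFin (imgcard C σ) i : Fin (Fintype.card V)) = σ w := by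
      apply nth_of_filter_lt
      · exact mem_image_of_mem _ hw
      · rw [← rk_eq_image]; exact hσ
    -- transfer along himg
    revert h1
    have : ∀ (s : Finset (Fin (Fintype.card V))) (hs : s = C.image σ)
        (h' : s.card = C.card),
        ((C.image σ).orderIsoOfFin (imgcard C σ) i : Fin (Fintype.card V)) = σ w →
        (s.orderIsoOfFin h' i : Fin (Fintype.card V)) = σ w := by
      rintro s rfl h' h1
      convert h1 using 3
    exact this _ himg _
  set τ := swapMap C w j σ with hτ
  have hτw : τ w = y := by simp [hτ, swapMap, hy]
  ext x
  have hdef : swapMap C w i τ x = Equiv.swap (τ w)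
      ((C.image τ).orderIsoOfFin (imgcard C τ) i : Fin (Fintype.card V)) (τ x) := rfl
  rw [hdef, hnth, hτw]
  have hτx : τ x = Equiv.swap (σ w) y (σ x) := rfl
  rw [hτx, Equiv.swap_comm y (σ w), Equiv.swap_apply_self]

lemma fiber_card_eq (C : Finset V) {w : V} (hw : w ∈ C) (i j : Fin C.card) :
    (univ.filter (fun σ : V ≃ Fin (Fintype.card V) => rk C w σ = (i : ℕ))).card =
    (univ.filter (fun σ : V ≃ Fin (Fintype.card V) => rk C w σ = (j : ℕ))).card := by
  apply card_bij' (fun σ _ => swapMap C w j σ) (fun σ _ => swapMap C w i σ)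
  · intro σ hσ
    simp only [mem_filter, mem_univ, true_and] at hσ ⊢
    rw [swapMap_rk C hw]
  · intro σ hσ
    simp only [mem_filter, mem_univ, true_and] at hσ ⊢
    rw [swapMap_rk C hw]
  · intro σ hσ
    simp only [mem_filter, mem_univ, true_and] at hσ
    exact swapMap_invol C hw i j σ hσ
  · intro σ hσ
    simp only [mem_filter, mem_univ, true_and] at hσ
    exact swapMap_invol C hw j i σ hσ

lemma count_rank_lt (C : Finset V) {w : V} (hw : w ∈ C) (t : ℕ) :
    C.card * (univ.filter (fun σ : V ≃ Fin (Fintype.card V) => rk C w σ < t)).card =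
      min t C.card * Fintype.card (V ≃ Fin (Fintype.card V)) := by
  set c := C.card with hc
  have hcpos : 0 < c := card_pos.mpr ⟨w, hw⟩
  set fibN : ℕ → ℕ := fun k =>
    (univ.filter (fun σ : V ≃ Fin (Fintype.card V) => rk C w σ = k)).card with hfib
  have h0 : ∀ k < c, fibN k = fibN 0 := by
    intro k hk
    exact fiber_card_eq C hw ⟨k, hk⟩ ⟨0, hcpos⟩
  have htot : Fintype.card (V ≃ Fin (Fintype.card V)) = c * fibN 0 := by
    rw [← Finset.card_univ]
    rw [card_eq_sum_card_fiberwise (f := rk C w) (t := range c)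
      (fun σ _ => mem_range.mpr (rk_lt C hw σ))]
    rw [Finset.sum_congr rfl (fun k hk => h0 k (mem_range.mp hk))]
    simp [mul_comm]
  have hlt : (univ.filter (fun σ : V ≃ Fin (Fintype.card V) => rk C w σ < t)).card =
      min t c * fibN 0 := by
    rw [card_eq_sum_card_fiberwise (f := rk C w) (t := range (min t c))
      (fun σ hσ => mem_range.mpr (lt_min (mem_filter.mp hσ).2 (rk_lt C hw σ)))]
    have hff : ∀ k ∈ range (min t c),
        ((univ.filter (fun σ : V ≃ Fin (Fintype.card V) => rk C w σ < t)).filter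
          (fun σ => rk C w σ = k)).card = fibN 0 := by
      intro k hk
      rw [filter_filter]
      have hkt : k < t := lt_of_lt_of_le (mem_range.mp hk) (min_le_left _ _)
      have heq : (univ.filter (fun σ : V ≃ Fin (Fintype.card V) =>
          rk C w σ < t ∧ rk C w σ = k)) =
          (univ.filter (fun σ : V ≃ Fin (Fintype.card V) => rk C w σ = k)) := by
        ext σ
        simp only [mem_filter, mem_univ, true_and]
        constructor
        · exact fun h => h.2
        · exact fun h => ⟨h ▸ hkt, h⟩
      rw [heq]
      exact h0 k (lt_of_lt_of_le (mem_range.mp hk) (min_le_right _ _))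
    rw [Finset.sum_congr rfl hff]
    simp [mul_comm]
  rw [htot, hlt]
  ring

end PTSAux

open Finset

lemma arith_bound (t b l : ℕ) (h3 : 3 * t ≤ b + l + 2) (hd : 2 ≤ b + l) :
    20 * min t (b + 1) ≤ 9 * (1 + l) * (b + 1) := by
  match l with
  | 0 => omega
  | 1 => omega
  | (k+2) =>
    have h1 : min t (b+1) ≤ b+1 := min_le_right _ _
    have h2 : 20 * (b+1) ≤ 9 * (1 + (k+2)) * (b+1) := by nlinarith
    omega

lemma ceil_third (d : ℕ) : 3 * ⌈(d : ℚ) / 3⌉₊ ≤ d + 2 := by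
  have h1 : (⌈(d:ℚ)/3⌉₊ : ℚ) < (d:ℚ)/3 + 1 := Nat.ceil_lt_add_one (by positivity)
  have h2 : ((3 * ⌈(d:ℚ)/3⌉₊ : ℕ) : ℚ) < ((d + 3 : ℕ) : ℚ) := by push_cast; linarith
  have h3 := Nat.cast_lt.mp h2
  omega

lemma degree_pos_of_connected {V : Type*} [Fintype V] {G : SimpleGraph V}
    (hconn : G.Connected) (hcard : 2 ≤ Fintype.card V) (v : V) : 0 < G.degree v := by
  obtain ⟨w, hw⟩ := Fintype.exists_ne_of_one_lt_card (by omega) v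
  obtain ⟨p⟩ := hconn.preconnected v w
  cases p with
  | nil => exact absurd rfl hw.symm
  | cons h _ => exact (SimpleGraph.degree_pos_iff_exists_adj _ _).mpr ⟨_, h⟩

lemma nbr_singleton {V : Type*} [Fintype V] {G : SimpleGraph V} {v u : V}
    (hd : G.degree v = 1) (hadj : G.Adj v u) : G.neighborFinset v = {u} := by
  have h1 : (G.neighborFinset v).card = 1 := by
    rwa [SimpleGraph.card_neighborFinset_eq_degree]
  obtain ⟨x, hx⟩ := Finset.card_eq_one.mp h1
  have hu : u ∈ G.neighborFinset v := by simpa using hadj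
  rw [hx, Finset.mem_singleton] at hu
  rw [hx, hu]

lemma leaf_neighbor_degree {V : Type*} [Fintype V] {G : SimpleGraph V}
    (hconn : G.Connected) (hcard : 3 ≤ Fintype.card V) (v : V) (hd : G.degree v = 1)
    (u : V) (hadj : G.Adj v u) : 2 ≤ G.degree u := by
  by_contra h
  have hdu : G.degree u = 1 := by
    have := degree_pos_of_connected hconn (by omega) u
    omega
  have hnv : G.neighborFinset v = {u} := nbr_singleton hd hadj
  have hnu : G.neighborFinset u = {v} := nbr_singleton hdu hadj.symm
  have conf : ∀ (a b : V), G.Walk a b → (a = u ∨ a = v) → (b = u ∨ b = v) := by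
    intro a b p
    induction p with
    | nil => exact id
    | @cons a c b hac q ih =>
      intro ha
      apply ih
      rcases ha with rfl|rfl
      · right
        have hc : c ∈ G.neighborFinset a := by simpa using hac
        rwa [hnu, Finset.mem_singleton] at hc
      · left
        have hc : c ∈ G.neighborFinset a := by simpa using hac
        rwa [hnv, Finset.mem_singleton] at hc
  have hsub : (Finset.univ : Finset V) ⊆ {u, v} := by
    intro z _
    obtain ⟨p⟩ := hconn.preconnected u z
    rcases conf u z p (Or.inl rfl) with rfl|rfl <;> simp
  have hc2 := Finset.card_le_card hsub
  have hle : ({u, v} : Finset V).card ≤ 2 :=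
    (Finset.card_insert_le _ _).trans (by simp)
  rw [Finset.card_univ] at hc2
  omega


open Finset PTSAux in
theorem perfect_target_set_one_third_thresholds {V : Type*} [Fintype V]
    (G : SimpleGraph V) (thr : V → ℕ) (hconn : G.Connected) (hcard : 3 ≤ Fintype.card V)
    (hthr : ∀ v : V, thr v ≤ ⌈(G.degree v : ℚ) / 3⌉₊) :
    ∃ X : Finset V, IsPerfectTargetSet G thr X ∧
      (X.card : ℝ) ≤ 0.45 * Fintype.card V := by
  classical
  have hdeg : ∀ v : V, 0 < G.degree v :=
    fun v => degree_pos_of_connected hconn (by omega) v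
  have hleafnbr : ∀ v, G.degree v = 1 → ∀ u, G.Adj v u → 2 ≤ G.degree u :=
    fun v hv u hu => leaf_neighbor_degree hconn hcard v hv u hu
  have hthr1 : ∀ v, G.degree v = 1 → thr v ≤ 1 := by
    intro v hv
    have h1 := hthr v
    rw [hv] at h1
    have h2 := ceil_third 1
    omega
  have hthr3 : ∀ v : V, 3 * thr v ≤ G.degree v + 2 := by
    intro v
    have h1 := hthr v
    have h2 := ceil_third (G.degree v)
    omega
  set S := bigS G with hSdef
  set Nf := Fintype.card (V ≃ Fin (Fintype.card V)) with hNf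
  have hNfpos : 0 < Nf := Fintype.card_pos_iff.mpr ⟨Fintype.equivFin V⟩
  set B : V → Finset V := fun w => G.neighborFinset w ∩ S with hBdef
  set C : V → Finset V := fun w => insert w (B w) with hCdef
  set lf : V → ℕ := fun w => (G.neighborFinset w \ S).card with hlfdef
  have hwB : ∀ w, w ∉ B w := by
    intro w hw
    have := (Finset.mem_inter.mp hw).1
    rw [SimpleGraph.mem_neighborFinset] at this
    exact G.irrefl this
  have hCcard : ∀ w, (C w).card = (B w).card + 1 :=
    fun w => Finset.card_insert_of_notMem (hwB w)
  have hdeg_split : ∀ w, (B w).card + lf w = G.degree w := by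
    intro w
    rw [← SimpleGraph.card_neighborFinset_eq_degree]
    exact Finset.card_inter_add_card_sdiff _ _
  have hXset : ∀ σ : V ≃ Fin (Fintype.card V),
      Xset G thr σ = S.filter (fun w => rk (C w) w σ < thr w) := by
    intro σ
    apply Finset.filter_congr
    intro w _
    have hrw : rk (C w) w σ = ((B w).filter (fun u => σ u < σ w)).card := by
      rw [rk, hCdef]
      simp only
      rw [Finset.filter_insert, if_neg (lt_irrefl (σ w))]
    rw [hrw]
  set cnt : V → ℕ := fun w =>
    (univ.filter (fun σ : V ≃ Fin (Fintype.card V) => rk (C w) w σ < thr w)).card with hcnt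
  have hperw : ∀ w ∈ S, 20 * cnt w ≤ 9 * (1 + lf w) * Nf := by
    intro w hwS
    have hwC : w ∈ C w := Finset.mem_insert_self _ _
    have hcount := count_rank_lt (C w) hwC (thr w)
    have hdw : 2 ≤ G.degree w := (Finset.mem_filter.mp hwS).2
    have hds := hdeg_split w
    have ht3 := hthr3 w
    have harith := arith_bound (thr w) (B w).card (lf w) (by omega) (by omega)
    have hc := hCcard w
    have hmain : (C w).card * (20 * cnt w) ≤ (C w).card * (9 * (1 + lf w) * Nf) := by
      calc (C w).card * (20 * cnt w) = 20 * ((C w).card * cnt w) := by ring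
        _ = 20 * (min (thr w) (C w).card * Nf) := by rw [hcount]
        _ = (20 * min (thr w) (C w).card) * Nf := by ring
        _ ≤ (9 * (1 + lf w) * (C w).card) * Nf := by
            apply Nat.mul_le_mul_right
            rw [hc]; exact harith
        _ = (C w).card * (9 * (1 + lf w) * Nf) := by ring
    exact Nat.le_of_mul_le_mul_left hmain (by omega)
  have hsum : ∑ σ : V ≃ Fin (Fintype.card V), (Xset G thr σ).card = ∑ w ∈ S, cnt w := by
    have h1 : ∀ σ : V ≃ Fin (Fintype.card V),
        (Xset G thr σ).card = ∑ w ∈ S, (if rk (C w) w σ < thr w then 1 else 0) := by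
      intro σ
      rw [hXset σ, Finset.card_filter]
    rw [Finset.sum_congr rfl (fun σ _ => h1 σ), Finset.sum_comm]
    apply Finset.sum_congr rfl
    intro w _
    rw [hcnt]
    simp only
    rw [Finset.card_filter]
  have hlfsum : ∑ w ∈ S, (1 + lf w) = Fintype.card V := by
    rw [Finset.sum_add_distrib]
    have h1 : ∑ _w ∈ S, 1 = S.card := by simp
    have h2 : ∑ w ∈ S, lf w = (univ \ S).card := by
      have hl : ∀ w, (G.neighborFinset w \ S) = (univ \ S).filter (fun v => G.Adj w v) := by
        intro w
        ext v
        simp only [Finset.mem_sdiff, Finset.mem_filter, Finset.mem_univ, true_and,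
          SimpleGraph.mem_neighborFinset]
        tauto
      have h3 : ∀ v ∈ univ \ S, (S.filter (fun w => G.Adj w v)).card = 1 := by
        intro v hv
        have hvnS : v ∉ S := (Finset.mem_sdiff.mp hv).2
        have hdv : G.degree v = 1 := by
          have h4 : ¬ 2 ≤ G.degree v := fun hc =>
            hvnS (Finset.mem_filter.mpr ⟨Finset.mem_univ v, hc⟩)
          have := hdeg v
          omega
        have h5 : S.filter (fun w => G.Adj w v) = G.neighborFinset v := by
          ext w
          simp only [Finset.mem_filter, SimpleGraph.mem_neighborFinset]
          constructor
          · exact fun hw => hw.2.symm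
          · intro hw
            refine ⟨?_, hw.symm⟩
            rw [hSdef]
            exact Finset.mem_filter.mpr ⟨Finset.mem_univ w, hleafnbr v hdv w hw⟩
        rw [h5, SimpleGraph.card_neighborFinset_eq_degree, hdv]
      calc ∑ w ∈ S, lf w
          = ∑ w ∈ S, ∑ v ∈ univ \ S, (if G.Adj w v then 1 else 0) := by
            apply Finset.sum_congr rfl
            intro w _
            rw [hlfdef]
            simp only
            rw [hl w, Finset.card_filter]
        _ = ∑ v ∈ univ \ S, ∑ w ∈ S, (if G.Adj w v then 1 else 0) := Finset.sum_comm
        _ = ∑ v ∈ univ \ S, 1 := by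
            apply Finset.sum_congr rfl
            intro v hv
            rw [← Finset.card_filter]
            exact h3 v hv
        _ = (univ \ S).card := by simp
    have h4 : (univ \ S).card = Fintype.card V - S.card := by
      rw [Finset.card_sdiff_of_subset (Finset.subset_univ S), Finset.card_univ]
    have h5 : S.card ≤ Fintype.card V := by
      have := Finset.card_le_card (Finset.subset_univ S)
      rwa [Finset.card_univ] at this
    omega
  have htotal : 20 * ∑ σ : V ≃ Fin (Fintype.card V), (Xset G thr σ).card
      ≤ 9 * Fintype.card V * Nf := by
    rw [hsum, Finset.mul_sum]
    calc ∑ w ∈ S, 20 * cnt w ≤ ∑ w ∈ S, 9 * (1 + lf w) * Nf := Finset.sum_le_sum hperw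
      _ = (∑ w ∈ S, 9 * (1 + lf w)) * Nf := by rw [Finset.sum_mul]
      _ = (9 * ∑ w ∈ S, (1 + lf w)) * Nf := by rw [Finset.mul_sum]
      _ = 9 * Fintype.card V * Nf := by rw [hlfsum]
  obtain ⟨σ, hσ⟩ : ∃ σ : V ≃ Fin (Fintype.card V),
      20 * (Xset G thr σ).card ≤ 9 * Fintype.card V := by
    by_contra hcon
    push_neg at hcon
    have h1 : ∀ σ ∈ (univ : Finset (V ≃ Fin (Fintype.card V))),
        9 * Fintype.card V + 1 ≤ 20 * (Xset G thr σ).card := fun σ _ => hcon σ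
    have h2 := Finset.sum_le_sum h1
    rw [Finset.sum_const, Finset.card_univ, smul_eq_mul] at h2
    have h3 : ∑ σ ∈ (univ : Finset (V ≃ Fin (Fintype.card V))), 20 * (Xset G thr σ).card
        = 20 * ∑ σ : V ≃ Fin (Fintype.card V), (Xset G thr σ).card := by
      rw [Finset.mul_sum]
    rw [h3] at h2
    have h4 : Nf * (9 * Fintype.card V + 1) ≤ 9 * Fintype.card V * Nf := le_trans h2 htotal
    nlinarith
  refine ⟨Xset G thr σ, pts_of_order G thr (by omega) hdeg hleafnbr hthr1 σ, ?_⟩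
  have hx : ((Xset G thr σ).card : ℝ) * 20 ≤ 9 * Fintype.card V := by
    have : ((20 * (Xset G thr σ).card : ℕ) : ℝ) ≤ ((9 * Fintype.card V : ℕ) : ℝ) :=
      Nat.cast_le.mpr hσ
    push_cast at this
    linarith
  have h45 : (0.45 : ℝ) = 9 / 20 := by norm_num
  rw [h45]
  linarith
end

section
/- For any permutation σ of V(G), the set P_σ = {v ∈ V(G) : the number of neighbours of v preceding v in σ is less than thr(v)} is a perfect target set of (G, thr). -/
open scoped Classical

lemma actSeq_mono {V : Type*} [Fintype V] (G : SimpleGraph V) (thr : V → ℕ)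
    (X : Finset V) {m n : ℕ} (h : m ≤ n) : actSeq G thr X m ⊆ actSeq G thr X n := by
  induction n with
  | zero => simp [Nat.le_zero.mp h]
  | succ n ih =>
    rcases Nat.lt_or_ge m (n+1) with h' | h'
    · exact (ih (Nat.lt_succ_iff.mp h')).trans
        (by rw [actSeq]; exact Finset.subset_union_left)
    · have : m = n + 1 := le_antisymm h h'
      simp [this]

theorem permutation_set_is_perfect {V : Type*} [Fintype V]
    (G : SimpleGraph V) (thr : V → ℕ) (σ : V ≃ Fin (Fintype.card V)) :
    IsPerfectTargetSet G thr
      (Finset.univ.filter (fun v =>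
        ((G.neighborFinset v).filter (fun u => σ u < σ v)).card < thr v)) := by
  set X : Finset V := Finset.univ.filter (fun v =>
        ((G.neighborFinset v).filter (fun u => σ u < σ v)).card < thr v) with hX
  have key : ∀ n : ℕ, ∀ v : V, (σ v : ℕ) < n → v ∈ actSeq G thr X n := by
    intro n
    induction n with
    | zero => intro v hv; omega
    | succ n ih =>
      intro v hv
      rcases Nat.lt_or_ge (σ v : ℕ) n with h' | h'
      · exact actSeq_mono G thr X (Nat.le_succ n) (ih v h')
      · have hvn : (σ v : ℕ) = n := by omega
        by_cases hx : ((G.neighborFinset v).filter (fun u => σ u < σ v)).card < thr v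
        · have hvX : v ∈ X := by simp [hX, hx]
          exact actSeq_mono G thr X (Nat.zero_le _) hvX
        · push_neg at hx
          have hsub : (G.neighborFinset v).filter (fun u => σ u < σ v) ⊆
              G.neighborFinset v ∩ actSeq G thr X n := by
            intro u hu
            simp only [Finset.mem_filter] at hu
            refine Finset.mem_inter.mpr ⟨hu.1, ih u ?_⟩
            have : (σ u : ℕ) < (σ v : ℕ) := hu.2
            omega
          have : thr v ≤ (G.neighborFinset v ∩ actSeq G thr X n).card :=
            hx.trans (Finset.card_le_card hsub)
          rw [actSeq]
          exact Finset.mem_union_right _ (by simp [this])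
  have : actFinal G thr X = Finset.univ := by
    apply Finset.eq_univ_iff_forall.mpr
    intro v
    exact key (Fintype.card V) v (σ v).isLt
  exact this
end

section
/- For a uniformly random permutation σ of V(G), the probability that a fixed vertex v belongs to P_σ = {u : number of neighbours of u preceding u in σ is less than thr(u)} equals thr(v)/(deg(v)+1), provided thr(v) ≤ deg(v)+1. -/
open scoped Classical

section aux
variable {α : Type*} [LinearOrder α] [DecidableEq α]

private def rk (T : Finset α) (x : α) : ℕ := (T.filter (· < x)).card

private lemma rk_orderIsoOfFin (T : Finset α) (i : Fin T.card) :
    rk T ((T.orderIsoOfFin rfl i : α)) = i := by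
  classical
  have himg : T.filter (· < (T.orderIsoOfFin rfl i : α)) =
      (Finset.Iio i).image (fun j => ((T.orderIsoOfFin rfl j : α))) := by
    ext y
    simp only [Finset.mem_filter, Finset.mem_image, Finset.mem_Iio]
    constructor
    · rintro ⟨hy, hlt⟩
      refine ⟨(T.orderIsoOfFin rfl).symm ⟨y, hy⟩, ?_, by simp⟩
      · rw [← (T.orderIsoOfFin rfl).lt_iff_lt, OrderIso.apply_symm_apply]
        exact Subtype.mk_lt_mk.mpr hlt
    · rintro ⟨j, hj, rfl⟩
      exact ⟨(T.orderIsoOfFin rfl j).2, Subtype.coe_lt_coe.mpr ((T.orderIsoOfFin rfl).lt_iff_lt.mpr hj)⟩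
  have hinj : Function.Injective (fun j : Fin T.card => ((T.orderIsoOfFin rfl j : α))) := by
    intro a b hab
    exact (T.orderIsoOfFin rfl).injective (Subtype.ext hab)
  rw [rk, himg, Finset.card_image_of_injective _ hinj, Fin.card_Iio]

private noncomputable def rot (T : Finset α) : Equiv.Perm α :=
  (finRotate T.card).extendDomain (T.orderIsoOfFin rfl).toEquiv

private lemma rot_apply (T : Finset α) {x : α} (hx : x ∈ T) :
    rot T x = ((T.orderIsoOfFin rfl (finRotate T.card
      ((T.orderIsoOfFin rfl).symm ⟨x, hx⟩)) : α)) := by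
  have := Equiv.Perm.extendDomain_apply_subtype (finRotate T.card)
    (T.orderIsoOfFin rfl).toEquiv hx
  simpa [rot] using this

private lemma rot_mem (T : Finset α) {x : α} (hx : x ∈ T) : rot T x ∈ T := by
  rw [rot_apply T hx]; exact (T.orderIsoOfFin rfl _).2

private lemma val_finRotate {k : ℕ} (i : Fin k) :
    ((finRotate k) i : ℕ) = ((i : ℕ) + 1) % k := by
  match k, i with
  | (m + 1), i =>
    rw [finRotate_succ_apply, Fin.val_add]
    have : ((1 : Fin (m+1)) : ℕ) = 1 % (m+1) := by
      rcases m with _ | m <;> simp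
    rw [this]
    conv_rhs => rw [Nat.add_mod]
    conv_lhs => rw [Nat.add_mod, Nat.mod_mod_of_dvd _ dvd_rfl]

private lemma rk_rot (T : Finset α) {x : α} (hx : x ∈ T) :
    rk T (rot T x) = (rk T x + 1) % T.card := by
  obtain ⟨m, hm⟩ : ∃ m, T.card = m + 1 :=
    ⟨T.card - 1, (Nat.succ_pred_eq_of_pos (Finset.card_pos.mpr ⟨x, hx⟩)).symm⟩
  set i := (T.orderIsoOfFin rfl).symm ⟨x, hx⟩ with hi
  have hxi : x = ((T.orderIsoOfFin rfl i : α)) := by simp [hi]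
  have h1 : rk T x = i := by rw [hxi]; exact rk_orderIsoOfFin T i
  have h2 : rk T (rot T x) = (finRotate T.card i : Fin T.card) := by
    rw [rot_apply T hx]; exact rk_orderIsoOfFin T _
  rw [h1, h2]
  exact val_finRotate i

private lemma image_rot (T : Finset α) : T.image (rot T) = T := by
  apply Finset.eq_of_subset_of_card_le
  · intro y hy
    obtain ⟨x, hx, rfl⟩ := Finset.mem_image.mp hy
    exact rot_mem T hx
  · rw [Finset.card_image_of_injective _ (rot T).injective]

end aux

private lemma mod_succ_inj {a b k : ℕ} (ha : a < k) (hb : b < k)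
    (hab : (a + 1) % k = (b + 1) % k) : a = b := by
  rcases Nat.lt_or_ge (a + 1) k with h1 | h1 <;>
    rcases Nat.lt_or_ge (b + 1) k with h2 | h2
  · rw [Nat.mod_eq_of_lt h1, Nat.mod_eq_of_lt h2] at hab; omega
  · have h3 : b + 1 = k := by omega
    rw [Nat.mod_eq_of_lt h1, h3, Nat.mod_self] at hab; omega
  · have h3 : a + 1 = k := by omega
    rw [h3, Nat.mod_self, Nat.mod_eq_of_lt h2] at hab; omega
  · omega

theorem probability_in_permutation_set {V : Type*} [Fintype V]
    (G : SimpleGraph V) (thr : V → ℕ) (v : V) (h : thr v ≤ G.degree v + 1) :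
    ((Finset.univ.filter (fun σ : V ≃ Fin (Fintype.card V) =>
        ((G.neighborFinset v).filter (fun u => σ u < σ v)).card < thr v)).card : ℝ) /
      (Fintype.card (V ≃ Fin (Fintype.card V))) = (thr v : ℝ) / (G.degree v + 1) := by
  classical
  set d := G.degree v with hd
  set S : Finset V := insert v (G.neighborFinset v) with hSdef
  have hvS : v ∈ S := Finset.mem_insert_self _ _
  have hS : S.card = d + 1 := by
    rw [hSdef, Finset.card_insert_of_notMem (G.notMem_neighborFinset_self v),
      G.card_neighborFinset_eq_degree]
  set c : (V ≃ Fin (Fintype.card V)) → ℕ :=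
    fun σ => ((G.neighborFinset v).filter (fun u => σ u < σ v)).card with hcdef
  set Tf : (V ≃ Fin (Fintype.card V)) → Finset (Fin (Fintype.card V)) :=
    fun σ => S.image σ with hTfdef
  have hTcard : ∀ σ, (Tf σ).card = d + 1 := fun σ => by
    rw [hTfdef]; rw [Finset.card_image_of_injective _ σ.injective, hS]
  have hmemT : ∀ σ, σ v ∈ Tf σ := fun σ => Finset.mem_image_of_mem _ hvS
  -- c as rank in Tf
  have hc : ∀ σ, c σ = rk (Tf σ) (σ v) := by
    intro σ
    have h1 : (Tf σ).filter (· < σ v) =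
        (S.filter (fun u => σ u < σ v)).image σ := by
      ext y
      simp only [hTfdef, Finset.mem_filter, Finset.mem_image]
      constructor
      · rintro ⟨⟨u, hu, rfl⟩, hy⟩; exact ⟨u, ⟨hu, hy⟩, rfl⟩
      · rintro ⟨u, ⟨hu, hy⟩, rfl⟩; exact ⟨⟨u, hu, rfl⟩, hy⟩
    have h2 : S.filter (fun u => σ u < σ v) =
        (G.neighborFinset v).filter (fun u => σ u < σ v) := by
      rw [hSdef, Finset.filter_insert, if_neg (lt_irrefl (σ v))]
    rw [hcdef, rk, h1, h2, Finset.card_image_of_injective _ σ.injective]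
  have hcle : ∀ σ, c σ ≤ d := fun σ => by
    rw [hcdef, hd, ← G.card_neighborFinset_eq_degree]
    exact Finset.card_filter_le _ _
  set ρ : (V ≃ Fin (Fintype.card V)) → (V ≃ Fin (Fintype.card V)) :=
    fun σ => σ.trans (rot (Tf σ)) with hρdef
  set ρ' : (V ≃ Fin (Fintype.card V)) → (V ≃ Fin (Fintype.card V)) :=
    fun σ => σ.trans (rot (Tf σ)).symm with hρ'def
  have hTρ : ∀ σ, Tf (ρ σ) = Tf σ := by
    intro σ
    have : Tf (ρ σ) = (Tf σ).image (rot (Tf σ)) := by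
      rw [hTfdef, hρdef]
      simp only [Equiv.coe_trans]
      rw [← Finset.image_image]
    rw [this, image_rot]
  have hTρ' : ∀ σ, Tf (ρ' σ) = Tf σ := by
    intro σ
    have h1 : Tf (ρ' σ) = (Tf σ).image (rot (Tf σ)).symm := by
      rw [hTfdef, hρ'def]
      simp only [Equiv.coe_trans]
      rw [← Finset.image_image]
    have h2 : ((Tf σ).image (rot (Tf σ)).symm).image (rot (Tf σ)) = Tf σ := by
      rw [Finset.image_image]
      simp only [Function.comp_def, Equiv.apply_symm_apply, Finset.image_id']
    rw [h1]
    have := congrArg (fun A => A.image (rot (Tf σ)).symm) (image_rot (Tf σ))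
    rw [← this, Finset.image_image]
    simp only [Function.comp_def, Equiv.symm_apply_apply, Finset.image_id']
  have hρρ' : ∀ σ, ρ' (ρ σ) = σ := by
    intro σ
    rw [hρ'def]
    simp only [hTρ σ]
    rw [hρdef]
    ext x
    simp
  have hρ'ρ : ∀ σ, ρ (ρ' σ) = σ := by
    intro σ
    rw [hρdef]
    simp only [hTρ' σ]
    rw [hρ'def]
    ext x
    simp
  have hcρ : ∀ σ, c (ρ σ) = (c σ + 1) % (d + 1) := by
    intro σ
    rw [hc, hTρ σ]
    have hv' : (ρ σ) v = rot (Tf σ) (σ v) := rfl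
    rw [hv', rk_rot _ (hmemT σ), hTcard σ, ← hc]
  -- fiber counts
  set f : ℕ → ℕ := fun j =>
    (Finset.univ.filter (fun σ => c σ = j)).card with hfdef
  have step : ∀ j, j ≤ d → f j = f ((j + 1) % (d + 1)) := by
    intro j hj
    rw [hfdef]
    apply Finset.card_bij' (fun σ _ => ρ σ) (fun τ _ => ρ' τ)
    · intro σ hσ
      simp only [Finset.mem_filter, Finset.mem_univ, true_and] at hσ ⊢
      rw [hcρ σ, hσ]
    · intro τ hτ
      simp only [Finset.mem_filter, Finset.mem_univ, true_and] at hτ ⊢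
      have h1 : c (ρ (ρ' τ)) = (c (ρ' τ) + 1) % (d + 1) := hcρ _
      rw [hρ'ρ τ, hτ] at h1
      exact mod_succ_inj (Nat.lt_succ_of_le (hcle _)) (Nat.lt_succ_of_le hj) h1.symm
    · intro σ _; exact hρρ' σ
    · intro τ _; exact hρ'ρ τ
  have const : ∀ j, j ≤ d → f j = f 0 := by
    intro j
    induction j with
    | zero => intro _; rfl
    | succ j ih =>
      intro hj
      have h1 : (j + 1) % (d + 1) = j + 1 := Nat.mod_eq_of_lt (by omega)
      rw [← h1, ← step j (by omega), ih (by omega)]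
  have total : Fintype.card (V ≃ Fin (Fintype.card V)) =
      ∑ j ∈ Finset.range (d + 1), f j := by
    rw [← Finset.card_univ]
    exact Finset.card_eq_sum_card_fiberwise
      (fun σ _ => Finset.mem_range.mpr (Nat.lt_succ_of_le (hcle σ)))
  have lhsCount : (Finset.univ.filter (fun σ => c σ < thr v)).card =
      ∑ j ∈ Finset.range (thr v), f j := by
    have h1 : (Finset.univ.filter (fun σ => c σ < thr v)).card =
        ∑ j ∈ Finset.range (thr v),
          ((Finset.univ.filter (fun σ => c σ < thr v)).filter (fun σ => c σ = j)).card :=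
      Finset.card_eq_sum_card_fiberwise
        (fun σ hσ => Finset.mem_range.mpr (Finset.mem_filter.mp hσ).2)
    rw [h1]
    apply Finset.sum_congr rfl
    intro j hj
    rw [hfdef]
    congr 1
    ext σ
    simp only [Finset.mem_filter, Finset.mem_univ, true_and]
    constructor
    · rintro ⟨_, h2⟩; exact h2
    · intro h2; exact ⟨by rw [h2]; exact Finset.mem_range.mp hj, h2⟩
  have sum1 : ∑ j ∈ Finset.range (d + 1), f j = (d + 1) * f 0 := by
    rw [Finset.sum_congr rfl (fun j hj => const j (by
      have := Finset.mem_range.mp hj; omega))]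
    rw [Finset.sum_const, Finset.card_range, smul_eq_mul]
  have sum2 : ∑ j ∈ Finset.range (thr v), f j = thr v * f 0 := by
    rw [Finset.sum_congr rfl (fun j hj => const j (by
      have := Finset.mem_range.mp hj; omega))]
    rw [Finset.sum_const, Finset.card_range, smul_eq_mul]
  have hNpos : 0 < Fintype.card (V ≃ Fin (Fintype.card V)) := by
    have : Nonempty (V ≃ Fin (Fintype.card V)) := ⟨Fintype.equivFin V⟩
    exact Fintype.card_pos
  have hf0 : (f 0 : ℝ) ≠ 0 := by
    have : f 0 ≠ 0 := by
      intro h0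
      rw [total, sum1, h0, Nat.mul_zero] at hNpos
      exact lt_irrefl 0 hNpos
    exact_mod_cast this
  rw [lhsCount, sum2, total, sum1]
  push_cast
  rw [mul_comm ((d : ℝ) + 1) _, mul_comm (thr v : ℝ) _]
  rw [mul_div_mul_left _ _ hf0]
end
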